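/- arXiv:1804.00757 — 5 statements merged into one kernel-verified Lean document; each statement's English description precedes it below -/
import Mathlib

section
/- Let τ > 0 and P_max ≥ 0 be real numbers, let t0 ≤ tf, let c : [t0, tf] → ℝ be continuous with 0 ≤ c(t) ≤ P_max for all t ∈ [t0, tf], and let u : [t0, tf] → ℝ be continuous with 0 ≤ u(t) ≤ 1 for all t ∈ [t0, tf]. If x : [t0, tf] → ℝ is differentiable and satisfies x'(t) = −(1/τ)·x(t) + (1/τ)·c(t)·u(t) for all t ∈ [t0, tf], and x(t0) ∈ [0, P_max], then x(t) ∈ [0, P_max] for all t ∈ [t0, tf]. -/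
lemma mono_aux (t0 tf : ℝ) (g g' : ℝ → ℝ)
    (hd : ∀ t ∈ Set.Icc t0 tf, HasDerivAt g (g' t) t)
    (hnn : ∀ t ∈ Set.Icc t0 tf, 0 ≤ g' t) :
    MonotoneOn g (Set.Icc t0 tf) := by
  apply monotoneOn_of_deriv_nonneg (convex_Icc t0 tf)
  · exact fun t ht => (hd t ht).continuousAt.continuousWithinAt
  · intro t ht
    exact (hd t (interior_subset ht)).differentiableAt.differentiableWithinAt
  · intro t ht
    rw [(hd t (interior_subset ht)).deriv]
    exact hnn t (interior_subset ht)

/-- Invariance of the interval `[0, P_max]` for the first-order lag ICE power dynamics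
`x' = -(1/τ)·x + (1/τ)·c(t)·u(t)` with `0 ≤ c(t) ≤ P_max` and `u(t) ∈ [0,1]`. -/
theorem stmt_0
    (τ Pmax t0 tf : ℝ) (hτ : 0 < τ) (hPmax : 0 ≤ Pmax) (ht : t0 ≤ tf)
    (c u x : ℝ → ℝ)
    (hc_cont : ContinuousOn c (Set.Icc t0 tf))
    (hc_bnd : ∀ t ∈ Set.Icc t0 tf, c t ∈ Set.Icc 0 Pmax)
    (hu_cont : ContinuousOn u (Set.Icc t0 tf))
    (hu_bnd : ∀ t ∈ Set.Icc t0 tf, u t ∈ Set.Icc (0:ℝ) 1)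
    (hx : ∀ t ∈ Set.Icc t0 tf,
      HasDerivAt x (-(1/τ) * x t + (1/τ) * c t * u t) t)
    (hx0 : x t0 ∈ Set.Icc 0 Pmax) :
    ∀ t ∈ Set.Icc t0 tf, x t ∈ Set.Icc 0 Pmax := by
  have hexp : ∀ t : ℝ, HasDerivAt (fun s => Real.exp (s/τ)) (Real.exp (t/τ) * (1/τ)) t := by
    intro t
    have h1 : HasDerivAt (fun s : ℝ => s / τ) (1/τ) t := (hasDerivAt_id t).div_const τ
    simpa [Function.comp_def] using (Real.hasDerivAt_exp (t/τ)).comp t h1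
  have hcu : ∀ t ∈ Set.Icc t0 tf, 0 ≤ c t * u t ∧ c t * u t ≤ Pmax := by
    intro t htt
    obtain ⟨hc0, hc1⟩ := hc_bnd t htt
    obtain ⟨hu0, hu1⟩ := hu_bnd t htt
    constructor
    · exact mul_nonneg hc0 hu0
    · calc c t * u t ≤ c t * 1 := by nlinarith
        _ ≤ Pmax := by linarith
  have hτ' : 0 ≤ 1/τ := by positivity
  -- lower bound via g = x * exp(t/τ)
  have hg : MonotoneOn (fun t => x t * Real.exp (t/τ)) (Set.Icc t0 tf) := by
    apply mono_aux t0 tf _ (fun t => (1/τ) * c t * u t * Real.exp (t/τ))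
    · intro t htt
      have := (hx t htt).fun_mul (hexp t)
      refine this.congr_deriv ?_
      ring
    · intro t htt
      have hc1 := (hcu t htt).1
      have he := (Real.exp_pos (t/τ)).le
      have : 0 ≤ 1/τ * c t * u t := by
        have := mul_nonneg hτ' hc1; nlinarith
      exact mul_nonneg this he
  have hh : MonotoneOn (fun t => (Pmax - x t) * Real.exp (t/τ)) (Set.Icc t0 tf) := by
    apply mono_aux t0 tf _ (fun t => (Pmax - c t * u t) * (1/τ) * Real.exp (t/τ))
    · intro t htt
      have := ((hasDerivAt_const t Pmax).fun_sub (hx t htt)).fun_mul (hexp t)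
      refine this.congr_deriv ?_
      ring
    · intro t htt
      have h1 := (hcu t htt).2
      have h2 := (Real.exp_pos (t/τ)).le
      have h3 : 0 ≤ Pmax - c t * u t := by linarith
      have := mul_nonneg (mul_nonneg h3 hτ') h2
      linarith
  intro t htt
  have ht0 : t0 ∈ Set.Icc t0 tf := Set.left_mem_Icc.mpr ht
  have hle : t0 ≤ t := htt.1
  have hg' := hg ht0 htt hle
  have hh' := hh ht0 htt hle
  obtain ⟨h0, h1⟩ := hx0
  have e0 := Real.exp_pos (t0/τ)
  have e1 := Real.exp_pos (t/τ)
  constructor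
  · nlinarith
  · nlinarith
end

section
/- Let k1, k2, g, c, ε be positive real numbers and let 0 < V_min ≤ V_max. Let α : [t0, tf] → ℝ and P : [t0, tf] → ℝ be continuous, with P_min ≤ P(t) ≤ P_max for all t. Assume that for all t ∈ [t0, tf]: (i) −(k1·V_max² + k2·cos(α(t))) − g·sin(α(t)) + (c/(V_max + ε))·P_max < 0, and (ii) −(k1·V_min² + k2·cos(α(t))) − g·sin(α(t)) + (c/(V_min + ε))·P_min > 0. If V : [t0, tf] → ℝ is differentiable, satisfies V'(t) = −(k1·V(t)² + k2·cos(α(t)))·sgn(V(t)) − g·sin(α(t)) + (c/(V(t) + ε))·P(t) for all t ∈ [t0, tf], and V(t0) ∈ [V_min, V_max], then V(t) ∈ [V_min, V_max] for all t ∈ [t0, tf]. -/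
open Set Filter Topology

/-- Barrier lemma: if `V` is continuous on `[t0,tf]`, starts `≤ B`, and has strictly
negative derivative whenever it touches `B`, then it stays `≤ B`. -/
lemma barrier_le (V : ℝ → ℝ) (t0 tf B : ℝ)
    (hcont : ∀ t ∈ Set.Icc t0 tf, ContinuousAt V t)
    (hd : ∀ t ∈ Set.Icc t0 tf, V t = B → ∃ d, d < 0 ∧ HasDerivAt V d t)
    (h0 : V t0 ≤ B) : ∀ t ∈ Set.Icc t0 tf, V t ≤ B := by
  rintro t1 ⟨ht01, ht1f⟩
  by_contra hB
  push_neg at hB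
  set K : Set ℝ := {s | s ∈ Set.Icc t0 t1 ∧ V s ≤ B} with hK
  have ht0K : t0 ∈ K := ⟨⟨le_refl _, ht01⟩, h0⟩
  have hKne : K.Nonempty := ⟨t0, ht0K⟩
  have hKbdd : BddAbove K := ⟨t1, fun s hs => hs.1.2⟩
  set τ := sSup K with hτ
  have hτ0 : t0 ≤ τ := le_csSup hKbdd ht0K
  have hτ1 : τ ≤ t1 := csSup_le hKne (fun s hs => hs.1.2)
  have hτIcc : τ ∈ Set.Icc t0 tf := ⟨hτ0, hτ1.trans ht1f⟩
  -- V τ ≤ B via closure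
  have hτcl : τ ∈ closure K := csSup_mem_closure hKne hKbdd
  have hVτle : V τ ≤ B := by
    have h1 : V τ ∈ closure (V '' K) :=
      (hcont τ hτIcc).continuousWithinAt.mem_closure_image hτcl
    have h2 : closure (V '' K) ⊆ Set.Iic B := by
      apply closure_minimal _ isClosed_Iic
      rintro _ ⟨s, hs, rfl⟩; exact hs.2
    exact h2 h1
  have hτlt : τ < t1 :=
    lt_of_le_of_ne hτ1 (fun h => absurd hVτle (by rw [h]; exact not_le.mpr hB))
  -- points right of τ have V > B
  have hright : ∀ s ∈ Set.Ioc τ t1, B < V s := by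
    rintro s ⟨hs1, hs2⟩
    by_contra h
    push_neg at h
    have : s ∈ K := ⟨⟨hτ0.trans hs1.le, hs2⟩, h⟩
    exact absurd (le_csSup hKbdd this) (not_le.mpr hs1)
  -- V τ ≥ B via right limit
  have hVτge : B ≤ V τ := by
    have hclIoc : τ ∈ closure (Set.Ioc τ t1) := by
      rw [closure_Ioc hτlt.ne]; exact ⟨le_refl _, hτlt.le⟩
    have h1 : V τ ∈ closure (V '' Set.Ioc τ t1) :=
      (hcont τ hτIcc).continuousWithinAt.mem_closure_image hclIoc
    have h2 : closure (V '' Set.Ioc τ t1) ⊆ Set.Ici B := by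
      apply closure_minimal _ isClosed_Ici
      rintro _ ⟨s, hs, rfl⟩; exact (hright s hs).le
    exact h2 h1
  have hVτ : V τ = B := le_antisymm hVτle hVτge
  obtain ⟨d, hd0, hderiv⟩ := hd τ hτIcc hVτ
  have T : Tendsto (slope V τ) (𝓝[>] τ) (𝓝 d) :=
    (hasDerivAt_iff_tendsto_slope.mp hderiv).mono_left
      (nhdsWithin_mono τ (fun x hx => ne_of_gt hx))
  have hev1 : ∀ᶠ s in 𝓝[>] τ, slope V τ s < 0 := T.eventually (gt_mem_nhds hd0)
  have hev2 : ∀ᶠ s in 𝓝[>] τ, s ∈ Set.Ioc τ t1 :=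
    Ioc_mem_nhdsGT_of_mem ⟨le_refl _, hτlt⟩
  obtain ⟨s, hs1, hs2⟩ := (hev1.and hev2).exists
  have hspos : 0 < s - τ := sub_pos.mpr hs2.1
  rw [slope_def_field] at hs1
  have : V s < V τ := by
    have := (div_neg_iff.mp (by simpa [div_eq_div_iff] using hs1))
    rcases this with ⟨h1, h2⟩ | ⟨h1, h2⟩
    · linarith
    · linarith
  rw [hVτ] at this
  exact absurd (hright s hs2) (not_lt.mpr this.le)

/-- Invariance of the velocity interval `[V_min, V_max]` for the power-based longitudinal
vehicle motion equation
`V' = -(k1·V² + k2·cos α(t))·sgn(V) - g·sin α(t) + (c/(V + ε))·P(t)`,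
under the stated inward-pointing boundary conditions. -/
theorem stmt_1
    (k1 k2 g c ε Vmin Vmax Pmin Pmax t0 tf : ℝ)
    (hk1 : 0 < k1) (hk2 : 0 < k2) (hg : 0 < g) (hc : 0 < c) (hε : 0 < ε)
    (hVmin : 0 < Vmin) (hVminmax : Vmin ≤ Vmax)
    (α P : ℝ → ℝ)
    (hα_cont : ContinuousOn α (Set.Icc t0 tf))
    (hP_cont : ContinuousOn P (Set.Icc t0 tf))
    (hP_bnd : ∀ t ∈ Set.Icc t0 tf, P t ∈ Set.Icc Pmin Pmax)
    (hmax : ∀ t ∈ Set.Icc t0 tf,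
      -(k1 * Vmax ^ 2 + k2 * Real.cos (α t)) - g * Real.sin (α t)
        + (c / (Vmax + ε)) * Pmax < 0)
    (hmin : ∀ t ∈ Set.Icc t0 tf,
      -(k1 * Vmin ^ 2 + k2 * Real.cos (α t)) - g * Real.sin (α t)
        + (c / (Vmin + ε)) * Pmin > 0)
    (V : ℝ → ℝ)
    (hV : ∀ t ∈ Set.Icc t0 tf,
      HasDerivAt V (-(k1 * V t ^ 2 + k2 * Real.cos (α t)) * Real.sign (V t)
        - g * Real.sin (α t) + (c / (V t + ε)) * P t) t)
    (hV0 : V t0 ∈ Set.Icc Vmin Vmax) :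
    ∀ t ∈ Set.Icc t0 tf, V t ∈ Set.Icc Vmin Vmax := by
  have hVεmax : 0 < Vmax + ε := by linarith
  have hVεmin : 0 < Vmin + ε := by linarith
  have hub : ∀ t ∈ Set.Icc t0 tf, V t ≤ Vmax := by
    apply barrier_le V t0 tf Vmax (fun t ht => (hV t ht).continuousAt)
      (fun t ht hVt => ?_) hV0.2
    refine ⟨_, ?_, hV t ht⟩
    rw [hVt, Real.sign_of_pos (lt_of_lt_of_le hVmin hVminmax)]
    have hP := (hP_bnd t ht).2
    have := hmax t ht
    have hcpos : 0 < c / (Vmax + ε) := div_pos hc hVεmax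
    nlinarith
  have hlb : ∀ t ∈ Set.Icc t0 tf, Vmin ≤ V t := by
    have := barrier_le (fun s => -(V s)) t0 tf (-Vmin)
      (fun t ht => ((hV t ht).continuousAt).neg)
      (fun t ht hVt => ?_) (by simpa using hV0.1)
    · intro t ht; have := this t ht; simpa using this
    have hVt' : V t = Vmin := by have h : -V t = -Vmin := hVt; linarith
    refine ⟨_, ?_, (hV t ht).neg⟩
    rw [hVt', Real.sign_of_pos hVmin]
    have hP := (hP_bnd t ht).1
    have := hmin t ht
    have hcpos : 0 < c / (Vmin + ε) := div_pos hc hVεmin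
    nlinarith
  exact fun t ht => ⟨hlb t ht, hub t ht⟩
end

section
/- Let Ω ⊆ ℝ^m be a nonempty convex set, for i = 0, 1 let f_i : ℝ^m → ℝ^n be given by f_i(u) = a_i + B_i u with a_i ∈ ℝ^n and B_i : ℝ^m → ℝ^n linear, and let L_0, L_1 : Ω → ℝ be convex functions. Then the augmented velocity–cost set Q = { (y, γ) ∈ ℝ^n × ℝ : there exist v ∈ [0,1], u_0 ∈ Ω, u_1 ∈ Ω with y = (1 − v)·f_0(u_0) + v·f_1(u_1) and γ ≥ (1 − v)·L_0(u_0) + v·L_1(u_1) } is a convex subset of ℝ^n × ℝ. -/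
lemma stmt_3_aux {m n : ℕ} {Ω : Set (Fin m → ℝ)} (hne : Ω.Nonempty) (hconv : Convex ℝ Ω)
    (a : Fin n → ℝ) (B : (Fin m → ℝ) →ₗ[ℝ] (Fin n → ℝ)) {L : (Fin m → ℝ) → ℝ}
    (hL : ConvexOn ℝ Ω L) {α β : ℝ} (hα : 0 ≤ α) (hβ : 0 ≤ β)
    {u u' : Fin m → ℝ} (hu : u ∈ Ω) (hu' : u' ∈ Ω) :
    ∃ w ∈ Ω, (α + β) • (a + B w) = α • (a + B u) + β • (a + B u') ∧
      (α + β) * L w ≤ α * L u + β * L u' := by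
  rcases eq_or_lt_of_le (add_nonneg hα hβ) with h0 | hpos
  · have hα0 : α = 0 := by linarith
    have hβ0 : β = 0 := by linarith
    obtain ⟨w, hw⟩ := hne
    exact ⟨w, hw, by simp [hα0, hβ0], by simp [hα0, hβ0]⟩
  · set s := α + β with hs
    have hsne : s ≠ 0 := ne_of_gt hpos
    have hsum : α / s + β / s = 1 := by field_simp; exact hs.symm
    refine ⟨(α / s) • u + (β / s) • u',
      hconv hu hu' (by positivity) (by positivity) hsum, ?_, ?_⟩
    · rw [map_add, map_smul, map_smul]
      match_scalars <;> field_simp <;> exact hs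
    · have h := hL.2 hu hu' (by positivity) (by positivity) hsum
      have h' := mul_le_mul_of_nonneg_left h (le_of_lt hpos)
      calc s * L ((α / s) • u + (β / s) • u')
          ≤ s * (α / s * L u + β / s * L u') := h'
        _ = α * L u + β * L u' := by field_simp

/-- Convexity of the augmented velocity–cost set of the embedded system: with `Ω`
nonempty convex, mode vector fields `fᵢ(u) = aᵢ + Bᵢ u` affine in the control, and
cost integrands `L₀, L₁` convex on `Ω`, the set
`Q = { (y, γ) : ∃ v ∈ [0,1], u₀, u₁ ∈ Ω, y = (1-v)·f₀(u₀) + v·f₁(u₁),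
       γ ≥ (1-v)·L₀(u₀) + v·L₁(u₁) }` is convex. -/
theorem stmt_3 (m n : ℕ)
    (Ω : Set (Fin m → ℝ)) (hne : Ω.Nonempty) (hconv : Convex ℝ Ω)
    (a0 a1 : Fin n → ℝ) (B0 B1 : (Fin m → ℝ) →ₗ[ℝ] (Fin n → ℝ))
    (f0 f1 : (Fin m → ℝ) → (Fin n → ℝ))
    (hf0 : ∀ u, f0 u = a0 + B0 u) (hf1 : ∀ u, f1 u = a1 + B1 u)
    (L0 L1 : (Fin m → ℝ) → ℝ)
    (hL0 : ConvexOn ℝ Ω L0) (hL1 : ConvexOn ℝ Ω L1)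
    (Q : Set ((Fin n → ℝ) × ℝ))
    (hQ : Q = { p | ∃ v ∈ Set.Icc (0:ℝ) 1, ∃ u0 ∈ Ω, ∃ u1 ∈ Ω,
      p.1 = (1 - v) • f0 u0 + v • f1 u1 ∧
      p.2 ≥ (1 - v) * L0 u0 + v * L1 u1 }) :
    Convex ℝ Q := by
  subst hQ
  rintro p ⟨v, ⟨hv0, hv1⟩, u0, hu0, u1, hu1, hp1, hp2⟩
    q ⟨v', ⟨hv0', hv1'⟩, u0', hu0', u1', hu1', hq1, hq2⟩ θ₁ θ₂ hθ₁ hθ₂ hθ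
  -- combine mode 0 with weights θ₁(1-v), θ₂(1-v')
  obtain ⟨w0, hw0, hw0f, hw0L⟩ := stmt_3_aux (α := θ₁ * (1 - v)) (β := θ₂ * (1 - v'))
    hne hconv a0 B0 hL0
    (mul_nonneg hθ₁ (by linarith)) (mul_nonneg hθ₂ (by linarith)) hu0 hu0'
  obtain ⟨w1, hw1, hw1f, hw1L⟩ := stmt_3_aux (α := θ₁ * v) (β := θ₂ * v')
    hne hconv a1 B1 hL1
    (mul_nonneg hθ₁ hv0) (mul_nonneg hθ₂ hv0') hu1 hu1'
  refine ⟨θ₁ * v + θ₂ * v', ⟨by positivity, by nlinarith⟩, w0, hw0, w1, hw1, ?_, ?_⟩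
  · have e0 : 1 - (θ₁ * v + θ₂ * v') = θ₁ * (1 - v) + θ₂ * (1 - v') := by linarith
    simp only [hf0, hf1] at hp1 hq1 ⊢
    show θ₁ • p.1 + θ₂ • q.1 = _
    rw [e0, hw0f, hw1f, hp1, hq1]
    module
  · have e0 : 1 - (θ₁ * v + θ₂ * v') = θ₁ * (1 - v) + θ₂ * (1 - v') := by linarith
    rw [e0]
    have hc : θ₁ * p.2 + θ₂ * q.2 ≥
        θ₁ * ((1 - v) * L0 u0 + v * L1 u1) + θ₂ * ((1 - v') * L0 u0' + v' * L1 u1') := by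
      have := mul_le_mul_of_nonneg_left hp2 hθ₁
      have := mul_le_mul_of_nonneg_left hq2 hθ₂
      linarith
    have : (θ₁ * (1 - v) + θ₂ * (1 - v')) * L0 w0 + (θ₁ * v + θ₂ * v') * L1 w1
        ≤ θ₁ * ((1 - v) * L0 u0 + v * L1 u1) + θ₂ * ((1 - v') * L0 u0' + v' * L1 u1') := by
      nlinarith [hw0L, hw1L]
    calc (θ₁ * (1 - v) + θ₂ * (1 - v')) * L0 w0 + (θ₁ * v + θ₂ * v') * L1 w1
        ≤ θ₁ * p.2 + θ₂ * q.2 := by linarith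
      _ = (θ₁ • p + θ₂ • q).2 := rfl
end

section
/- For every Lebesgue-measurable function v : [a, b] → [0, 1] (a ≤ b real) and every δ > 0, there exists a function w : [a, b] → {0, 1} which is constant on each subinterval of some finite partition a = T_0 < T_1 < ... < T_k = b, such that |∫_a^t (v(s) − w(s)) ds| ≤ δ for every t ∈ [a, b]. -/
open MeasureTheory Set

noncomputable def greedyE (c : ℕ → ℝ) (h : ℝ) : ℕ → ℝ
  | 0 => 0
  | (i+1) => greedyE c h i + c i - (if greedyE c h i ≤ 0 then 0 else h)

noncomputable def greedyR (c : ℕ → ℝ) (h : ℝ) (i : ℕ) : ℝ :=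
  if greedyE c h i ≤ 0 then 0 else 1

lemma greedyR_mem (c : ℕ → ℝ) (h : ℝ) (i : ℕ) :
    greedyR c h i = 0 ∨ greedyR c h i = 1 := by
  unfold greedyR; split <;> simp

lemma greedyE_succ (c : ℕ → ℝ) (h : ℝ) (i : ℕ) :
    greedyE c h (i+1) = greedyE c h i + c i - h * greedyR c h i := by
  show greedyE c h i + c i - _ = _
  unfold greedyR; split <;> ring

lemma greedyE_abs (c : ℕ → ℝ) (h : ℝ) (hh : 0 ≤ h) (n : ℕ)
    (hc : ∀ i < n, c i ∈ Set.Icc 0 h) : ∀ i ≤ n, |greedyE c h i| ≤ h := by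
  intro i hi
  induction i with
  | zero => show |(0:ℝ)| ≤ h; simpa using hh
  | succ i ih =>
    have hci := hc i (lt_of_lt_of_le (Nat.lt_succ_self i) hi)
    have hE := ih (le_trans (Nat.le_succ i) hi)
    rw [abs_le] at hE ⊢
    rw [greedyE_succ]
    unfold greedyR
    split <;> rename_i hcase <;> constructor <;> nlinarith [hci.1, hci.2]

/-- Any measurable relaxed switching signal `v : [a,b] → [0,1]` can be approximated
by a bang-bang (piecewise constant, `{0,1}`-valued) switching signal `w` whose
running integral stays within `δ` of that of `v`, uniformly on `[a,b]`. -/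
theorem stmt_4
    (a b : ℝ) (hab : a ≤ b)
    (v : ℝ → ℝ) (hv_meas : Measurable v)
    (hv_bnd : ∀ t ∈ Set.Icc a b, v t ∈ Set.Icc (0:ℝ) 1)
    (δ : ℝ) (hδ : 0 < δ) :
    ∃ w : ℝ → ℝ, Measurable w ∧
      (∀ t ∈ Set.Icc a b, w t ∈ ({0, 1} : Set ℝ)) ∧
      (∃ (k : ℕ) (T : Fin (k + 1) → ℝ), StrictMono T ∧ T 0 = a ∧ T (Fin.last k) = b ∧
        ∀ i : Fin k, ∀ s ∈ Set.Ico (T i.castSucc) (T i.succ),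
          ∀ s' ∈ Set.Ico (T i.castSucc) (T i.succ), w s = w s') ∧
      ∀ t ∈ Set.Icc a b, |∫ s in a..t, (v s - w s)| ≤ δ := by
  rcases eq_or_lt_of_le hab with heq | hlt
  · -- degenerate case a = b
    refine ⟨fun _ => 0, measurable_const, fun t _ => Or.inl rfl,
      ⟨0, fun _ => a, ?_, rfl, heq ▸ rfl, fun i => i.elim0⟩, ?_⟩
    · intro i j hij
      rw [Fin.lt_def] at hij
      omega
    · intro t ht
      have : t = a := le_antisymm (heq ▸ ht.2) ht.1
      subst this
      simp [intervalIntegral.integral_same, hδ.le]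
  -- main case a < b
  set n : ℕ := ⌈2 * (b - a) / δ⌉₊ with hn_def
  have hn : 0 < n := Nat.ceil_pos.mpr (div_pos (by linarith) hδ)
  set h : ℝ := (b - a) / n with hh_def
  have hnpos : (0:ℝ) < n := by exact_mod_cast hn
  have hh : 0 < h := div_pos (by linarith) hnpos
  have hnh : (n : ℝ) * h = b - a := by
    rw [hh_def, mul_comm, div_mul_cancel₀ _ hnpos.ne']
  have h2 : 2 * h ≤ δ := by
    have hle : 2 * (b - a) / δ ≤ (n : ℝ) := Nat.le_ceil _
    have : 2 * (b - a) ≤ δ * n := by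
      rw [div_le_iff₀ hδ] at hle; linarith
    rw [← hnh] at this
    nlinarith
  set T : ℕ → ℝ := fun i => a + i * h with hT_def
  have hT0 : T 0 = a := by simp [hT_def]
  have hTn : T n = b := by simp [hT_def]; linarith [hnh]
  have hTmono : ∀ i j : ℕ, i ≤ j → T i ≤ T j := by
    intro i j hij
    have : (i:ℝ) ≤ j := by exact_mod_cast hij
    simp only [hT_def]
    nlinarith
  have hTstep : ∀ i : ℕ, T (i+1) - T i = h := by
    intro i; simp [hT_def]; push_cast; ring
  have hTab : ∀ i ≤ n, T i ∈ Set.Icc a b := by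
    intro i hi
    constructor
    · rw [← hT0]; exact hTmono 0 i (Nat.zero_le _)
    · rw [← hTn]; exact hTmono i n hi
  set c : ℕ → ℝ := fun i => ∫ s in (T i)..(T (i+1)), v s with hc_def
  set w : ℝ → ℝ := fun t => greedyR c h ⌊(t - a) / h⌋₊ with hw_def
  have hwval : ∀ t, w t = 0 ∨ w t = 1 := fun t => greedyR_mem c h _
  have hw_meas : Measurable w := by
    apply Measurable.comp (f := fun t : ℝ => ⌊(t - a) / h⌋₊) (g := greedyR c h)
    · exact measurable_from_nat
    · exact Nat.measurable_floor.comp ((measurable_id.sub measurable_const).div measurable_const)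
  -- integrability
  have habs : ∀ s ∈ Set.Icc a b, |v s - w s| ≤ 1 := by
    intro s hs
    obtain ⟨h0, h1⟩ := hv_bnd s hs
    rcases hwval s with hw | hw <;> rw [abs_le, hw] <;> constructor <;> linarith
  have hv_int : IntegrableOn v (Set.Icc a b) := by
    apply Measure.integrableOn_of_bounded (M := 1) measure_Icc_lt_top.ne
      hv_meas.aestronglyMeasurable
    rw [ae_restrict_iff' measurableSet_Icc]
    filter_upwards with x hx
    obtain ⟨h0, h1⟩ := hv_bnd x hx
    rw [Real.norm_eq_abs, abs_le]; exact ⟨by linarith, h1⟩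
  have hw_int : IntegrableOn w (Set.Icc a b) := by
    apply Measure.integrableOn_of_bounded (M := 1) measure_Icc_lt_top.ne
      hw_meas.aestronglyMeasurable
    filter_upwards with x
    rcases hwval x with h0 | h0 <;> simp [h0]
  have hIIgen : ∀ (f : ℝ → ℝ), IntegrableOn f (Set.Icc a b) →
      ∀ x y, a ≤ x → x ≤ y → y ≤ b → IntervalIntegrable f volume x y := by
    intro f hf x y hax hxy hyb
    apply MeasureTheory.IntegrableOn.intervalIntegrable
    apply hf.mono_set
    rw [Set.uIcc_of_le hxy]
    exact Set.Icc_subset_Icc hax hyb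
  have hIIv := hIIgen v hv_int
  have hIIw := hIIgen w hw_int
  have hIIvw := hIIgen (fun s => v s - w s) (hv_int.sub hw_int)
  -- floor identification
  have hfloor : ∀ i : ℕ, ∀ s, T i ≤ s → s < T (i+1) → ⌊(s - a) / h⌋₊ = i := by
    intro i s h1 h2
    have hi : (i : ℝ) ≤ (s - a) / h := by
      rw [le_div_iff₀ hh]
      simp only [hT_def] at h1; linarith
    have hi2 : (s - a) / h < i + 1 := by
      rw [div_lt_iff₀ hh]
      simp only [hT_def] at h2; push_cast at h2 ⊢; linarith
    have h0 : (0:ℝ) ≤ (s - a) / h := le_trans (by positivity) hi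
    rw [Nat.floor_eq_iff h0]
    exact ⟨hi, hi2⟩
  have hwconst : ∀ i : ℕ, ∀ s ∈ Set.Ico (T i) (T (i+1)), w s = greedyR c h i := by
    intro i s hs
    simp only [hw_def, hfloor i s hs.1 hs.2]
  -- integral of w over a block
  have hwint : ∀ i : ℕ, ∫ s in (T i)..(T (i+1)), w s = h * greedyR c h i := by
    intro i
    have hle : T i ≤ T (i+1) := hTmono i (i+1) (Nat.le_succ i)
    rw [intervalIntegral.integral_of_le hle, MeasureTheory.integral_Ioc_eq_integral_Ioo,
      MeasureTheory.setIntegral_congr_fun measurableSet_Ioo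
        (fun s hs => hwconst i s ⟨hs.1.le, hs.2⟩)]
    rw [setIntegral_const, Real.volume_real_Ioo_of_le hle, hTstep i, smul_eq_mul]
  -- c bounds
  have hc_bnd : ∀ i < n, c i ∈ Set.Icc 0 h := by
    intro i hi
    have hle : T i ≤ T (i+1) := hTmono i (i+1) (Nat.le_succ i)
    have hsub : Set.Icc (T i) (T (i+1)) ⊆ Set.Icc a b :=
      Set.Icc_subset_Icc (hTab i (le_of_lt hi)).1 (hTab (i+1) hi).2
    constructor
    · exact intervalIntegral.integral_nonneg hle (fun u hu => (hv_bnd u (hsub hu)).1)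
    · have := intervalIntegral.norm_integral_le_of_norm_le_const (C := 1)
        (f := v) (a := T i) (b := T (i+1)) ?_
      · rw [Real.norm_eq_abs] at this
        calc c i ≤ |c i| := le_abs_self _
        _ ≤ 1 * |T (i+1) - T i| := this
        _ = h := by rw [hTstep i, one_mul, abs_of_nonneg hh.le]
      · intro x hx
        rw [Set.uIoc_of_le hle] at hx
        have hxab : x ∈ Set.Icc a b := hsub ⟨hx.1.le, hx.2⟩
        obtain ⟨h0, h1⟩ := hv_bnd x hxab
        rw [Real.norm_eq_abs, abs_le]; exact ⟨by linarith, h1⟩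
  -- key recursion
  have hE : ∀ i ≤ n, ∫ s in a..(T i), (v s - w s) = greedyE c h i := by
    intro i hi
    induction i with
    | zero => rw [hT0]; simp [greedyE]
    | succ i ih =>
      have hi' : i ≤ n := le_trans (Nat.le_succ i) hi
      have hle : T i ≤ T (i+1) := hTmono i (i+1) (Nat.le_succ i)
      have ha_i : a ≤ T i := (hTab i hi').1
      have hb_i : T (i+1) ≤ b := (hTab (i+1) hi).2
      rw [← intervalIntegral.integral_add_adjacent_intervals
        (hIIvw a (T i) le_rfl ha_i (le_trans hle hb_i))
        (hIIvw (T i) (T (i+1)) ha_i hle hb_i)]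
      rw [ih hi', intervalIntegral.integral_sub
        (hIIv (T i) (T (i+1)) ha_i hle hb_i) (hIIw (T i) (T (i+1)) ha_i hle hb_i)]
      rw [hwint i, greedyE_succ]
      simp only [hc_def]
      ring
  -- conclusion
  refine ⟨w, hw_meas, fun t _ => by rcases hwval t with h0 | h0 <;> simp [h0], ?_, ?_⟩
  · refine ⟨n, fun i => T (i : ℕ), ?_, by simp [hT0], by simp [Fin.last, hTn], ?_⟩
    · intro i j hij
      have : (i:ℕ) < (j:ℕ) := hij
      have : ((i:ℕ):ℝ) < ((j:ℕ):ℝ) := by exact_mod_cast this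
      simp only [hT_def]
      nlinarith
    · intro i s hs s' hs'
      simp only [Fin.coe_castSucc, Fin.val_succ] at hs hs'
      rw [hwconst i s hs, hwconst i s' hs']
  · intro t ht
    set m : ℕ := min ⌊(t - a) / h⌋₊ (n - 1) with hm_def
    have hmle : m ≤ n - 1 := min_le_right _ _
    have hm1 : m + 1 ≤ n := by omega
    have hm' : m ≤ n := by omega
    have hta : 0 ≤ (t - a) / h := div_nonneg (by linarith [ht.1]) hh.le
    have hTmt : T m ≤ t := by
      have h1 : (m : ℝ) ≤ ⌊(t - a) / h⌋₊ := by exact_mod_cast min_le_left _ _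
      have h2 : (⌊(t - a) / h⌋₊ : ℝ) ≤ (t - a) / h := Nat.floor_le hta
      have h3 : (m : ℝ) * h ≤ t - a := by
        rw [← le_div_iff₀ hh]; linarith
      simp only [hT_def]; linarith
    have htT : t ≤ T (m + 1) := by
      rcases le_or_gt ⌊(t - a) / h⌋₊ (n - 1) with hc1 | hc1
      · have hmeq : m = ⌊(t - a) / h⌋₊ := min_eq_left hc1
        have h4 : (t - a) / h < (m : ℝ) + 1 := by
          have := Nat.lt_floor_add_one ((t - a) / h)
          rw [hmeq]; push_cast; push_cast at this; linarith
        have h5 : t - a < ((m : ℝ) + 1) * h := by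
          rw [← div_lt_iff₀ hh]; linarith
        simp only [hT_def]; push_cast; linarith
      · have hmeq : m = n - 1 := min_eq_right (le_of_lt hc1)
        have : m + 1 = n := by omega
        rw [this, hTn]; exact ht.2
    have ha_m : a ≤ T m := (hTab m hm').1
    have hb_m1 : T (m+1) ≤ b := (hTab (m+1) hm1).2
    have htb : t ≤ b := ht.2
    rw [← intervalIntegral.integral_add_adjacent_intervals
      (hIIvw a (T m) le_rfl ha_m (le_trans hTmt htb))
      (hIIvw (T m) t ha_m hTmt htb)]
    rw [hE m hm']
    have hEm : |greedyE c h m| ≤ h := greedyE_abs c h hh.le n hc_bnd m hm'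
    have hR : |∫ s in (T m)..t, (v s - w s)| ≤ h := by
      have hb1 := intervalIntegral.norm_integral_le_of_norm_le_const (C := 1)
        (f := fun s => v s - w s) (a := T m) (b := t) ?_
      · rw [Real.norm_eq_abs] at hb1
        have hTm1 : T (m+1) - T m = h := hTstep m
        calc |∫ s in (T m)..t, (v s - w s)| ≤ 1 * |t - T m| := hb1
        _ = t - T m := by rw [one_mul, abs_of_nonneg (by linarith)]
        _ ≤ h := by linarith
      · intro x hx
        rw [Set.uIoc_of_le hTmt] at hx
        exact le_trans (le_of_eq (Real.norm_eq_abs _))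
          (habs x ⟨le_trans ha_m hx.1.le, le_trans hx.2 htb⟩)
    calc |greedyE c h m + ∫ s in (T m)..t, (v s - w s)|
        ≤ |greedyE c h m| + |∫ s in (T m)..t, (v s - w s)| := abs_add_le _ _
      _ ≤ h + h := add_le_add hEm hR
      _ ≤ δ := by linarith
end

section
/- Let f_0, f_1 : ℝ^n → ℝ^n be Lipschitz continuous with Lipschitz constant L and bounded in norm by M on ℝ^n, let a ≤ b, and let v, w : [a, b] → [0, 1] be measurable functions such that |∫_a^t (v(s) − w(s)) ds| ≤ δ for all t ∈ [a, b]. Let x, y : [a, b] → ℝ^n be absolutely continuous with x(a) = y(a), satisfying x'(t) = (1 − v(t))·f_0(x(t)) + v(t)·f_1(x(t)) and y'(t) = (1 − w(t))·f_0(y(t)) + w(t)·f_1(y(t)) for almost every t ∈ [a, b]. Then there exists a constant C, depending only on L, M, and b − a (for instance C = 2M·(1 + L·(b − a))·e^{3L(b−a)} suffices), such that ‖x(t) − y(t)‖ ≤ C·δ for all t ∈ [a, b]. -/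
open Set MeasureTheory intervalIntegral
open scoped Interval

section AuxSwitched
set_option linter.unusedSectionVars false
set_option maxHeartbeats 1000000
variable {E : Type*} [NormedAddCommGroup E] [NormedSpace ℝ E] [CompleteSpace E]

lemma my_integrableOn_of_bound {F : ℝ → E} {S : Set ℝ} (hSm : MeasurableSet S)
    (hfin : volume S < ⊤)
    (hmeas : AEStronglyMeasurable F (volume.restrict S)) (C : ℝ) (hb : ∀ s ∈ S, ‖F s‖ ≤ C) :
    IntegrableOn F S :=
  ⟨hmeas, HasFiniteIntegral.restrict_of_bounded C hfin
    ((ae_restrict_iff' hSm).mpr (ae_of_all _ hb))⟩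

lemma my_abel_sum (c : ℕ → ℝ) (G : ℕ → E) (m : ℕ) :
    ∑ i ∈ Finset.range (m+1), (c (i+1) - c i) • G i
      = c (m+1) • G m - c 0 • G 0 - ∑ i ∈ Finset.range m, c (i+1) • (G (i+1) - G i) := by
  induction m with
  | zero => simp [sub_smul]
  | succ m ih =>
      rw [Finset.sum_range_succ, ih, Finset.sum_range_succ]
      simp only [sub_smul, smul_sub]
      abel

lemma my_stepB (a b t M L δ ε : ℝ) (hab : a ≤ b) (ht : t ∈ Icc a b)
    (hM : 0 ≤ M) (hL : 0 ≤ L) (hδ : 0 ≤ δ) (hε : 0 < ε)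
    (u : ℝ → ℝ) (g : ℝ → E)
    (hint : IntegrableOn (fun s => u s • g s) (Icc a b))
    (huint : IntegrableOn u (Icc a b))
    (hub : ∀ s ∈ Icc a b, |u s| ≤ 1)
    (hU : ∀ τ ∈ Icc a b, |∫ s in a..τ, u s| ≤ δ)
    (hgb : ∀ s, ‖g s‖ ≤ 2*M)
    (hglip : ∀ s ∈ Icc a b, ∀ τ ∈ Icc a b, ‖g τ - g s‖ ≤ 2*L*M*|τ - s|) :
    ‖∫ s in a..t, u s • g s‖ ≤ 2*M*(1 + L*(b-a))*δ + ε := by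
  have hRHS0 : 0 ≤ 2*M*(1 + L*(b-a))*δ := by
    have : (0:ℝ) ≤ 1 + L*(b-a) := by nlinarith
    positivity
  have huIcc : ∀ {s τ : ℝ}, s ∈ Icc a b → τ ∈ Icc a b → Ι s τ ⊆ Icc a b := by
    intro s τ hs hτ r hr
    rcases Set.mem_uIoc.mp hr with h | h
    · exact ⟨hs.1.trans h.1.le, h.2.trans hτ.2⟩
    · exact ⟨hτ.1.trans h.1.le, h.2.trans hs.2⟩
  have hii : ∀ {s τ : ℝ}, s ∈ Icc a b → τ ∈ Icc a b →
      IntervalIntegrable (fun r => u r • g r) volume s τ := by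
    intro s τ hs hτ
    exact (hint.mono_set (uIcc_subset_Icc hs hτ)).intervalIntegrable
  have huii : ∀ {s τ : ℝ}, s ∈ Icc a b → τ ∈ Icc a b → IntervalIntegrable u volume s τ :=
    fun hs hτ => (huint.mono_set (uIcc_subset_Icc hs hτ)).intervalIntegrable
  have haI : a ∈ Icc a b := ⟨le_rfl, hab⟩
  rcases eq_or_lt_of_le ht.1 with h | hat
  · rw [← h]
    simp only [intervalIntegral.integral_same, norm_zero]
    linarith
  obtain ⟨N0, hN0⟩ := exists_nat_ge (2*L*M*(t-a)*(t-a)/ε)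
  set N : ℕ := N0 + 1 with hNdef
  have hNpos : 0 < (N:ℝ) := by positivity
  have hNe : 2*L*M*(t-a)*(t-a) ≤ N * ε := by
    have h1 : 2*L*M*(t-a)*(t-a)/ε ≤ (N:ℝ) := le_trans hN0 (by rw [hNdef]; push_cast; linarith)
    calc 2*L*M*(t-a)*(t-a) = (2*L*M*(t-a)*(t-a)/ε) * ε := by field_simp
    _ ≤ N * ε := mul_le_mul_of_nonneg_right h1 hε.le
  set h0 : ℝ := (t-a)/N with hh0
  have hh0pos : 0 < h0 := by
    apply div_pos (by linarith) hNpos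
  set p : ℕ → ℝ := fun i => a + i * h0 with hp
  have hpstep : ∀ i : ℕ, p (i+1) - p i = h0 := by
    intro i; simp only [hp]; push_cast; ring
  have hpmono : ∀ i : ℕ, p i ≤ p (i+1) := by
    intro i; nlinarith [hpstep i]
  have hp0 : p 0 = a := by simp [hp]
  have hNne : (N:ℝ) ≠ 0 := ne_of_gt hNpos
  have hNh0 : (N:ℝ) * h0 = t - a := by
    rw [hh0, mul_div_cancel₀ _ hNne]
  have hpt : p N = t := by
    show a + (N:ℝ) * h0 = t
    rw [hNh0]; ring
  have hplet : ∀ i : ℕ, i ≤ N → p i ≤ t := by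
    intro i hi
    have h1 : (i:ℝ) * h0 ≤ (N:ℝ) * h0 := by
      apply mul_le_mul_of_nonneg_right _ hh0pos.le
      exact_mod_cast hi
    have h2 : p i ≤ p N := by
      show a + (i:ℝ) * h0 ≤ a + (N:ℝ) * h0
      linarith
    rwa [hpt] at h2
  have hpmem : ∀ i : ℕ, i ≤ N → p i ∈ Icc a b := by
    intro i hi
    refine ⟨?_, (hplet i hi).trans ht.2⟩
    simp only [hp]
    nlinarith [hh0pos.le, Nat.cast_nonneg (α := ℝ) i]
  set c : ℕ → ℝ := fun i => ∫ s in a..p i, u s with hcdef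
  have hc0 : c 0 = 0 := by simp [hcdef, hp0]
  have hcδ : ∀ i, i ≤ N → |c i| ≤ δ := fun i hi => hU (p i) (hpmem i hi)
  have hcstep : ∀ i : ℕ, i < N → c (i+1) - c i = ∫ s in p i..p (i+1), u s := by
    intro i hi
    have := integral_add_adjacent_intervals (f := u) (μ := volume)
      (a := a) (b := p i) (c := p (i+1))
      (huii haI (hpmem i hi.le)) (huii (hpmem i hi.le) (hpmem (i+1) hi))
    simp only [hcdef]
    linarith [this]
  have hsplit : (∫ s in a..t, u s • g s)
      = ∑ i ∈ Finset.range N, ∫ s in p i..p (i+1), u s • g s := by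
    rw [intervalIntegral.sum_integral_adjacent_intervals
        (a := p) (n := N) (fun k hk => hii (hpmem k hk.le) (hpmem (k+1) hk)), hp0, hpt]
  have hdecomp : ∀ i : ℕ, i < N → (∫ s in p i..p (i+1), u s • g s)
      = (∫ s in p i..p (i+1), u s • (g s - g (p i))) + (c (i+1) - c i) • g (p i) := by
    intro i hi
    have m1 : p i ∈ Icc a b := hpmem i hi.le
    have m2 : p (i+1) ∈ Icc a b := hpmem (i+1) hi
    have int2 : IntervalIntegrable (fun s => u s • g (p i)) volume (p i) (p (i+1)) :=
      ⟨(huii m1 m2).1.smul_const _, (huii m1 m2).2.smul_const _⟩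
    have int1 : IntervalIntegrable (fun s => u s • (g s - g (p i))) volume (p i) (p (i+1)) := by
      have heq : (fun s => u s • (g s - g (p i)))
          = fun s => u s • g s - u s • g (p i) := by
        funext s; rw [smul_sub]
      rw [heq]
      exact (hii m1 m2).sub int2
    rw [hcstep i hi, ← intervalIntegral.integral_smul_const,
      ← intervalIntegral.integral_add int1 int2]
    apply intervalIntegral.integral_congr
    intro s _
    simp [smul_sub]
  have hAbnd : ∀ i : ℕ, i < N →
      ‖∫ s in p i..p (i+1), u s • (g s - g (p i))‖ ≤ 2*L*M*h0*h0 := by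
    intro i hi
    have m1 : p i ∈ Icc a b := hpmem i hi.le
    have m2 : p (i+1) ∈ Icc a b := hpmem (i+1) hi
    have hb1 : ∀ s ∈ Ι (p i) (p (i+1)), ‖u s • (g s - g (p i))‖ ≤ 2*L*M*h0 := by
      intro s hs
      have hsI : s ∈ Icc a b := huIcc m1 m2 hs
      rw [Set.uIoc_of_le (hpmono i)] at hs
      have hgl := hglip (p i) m1 s hsI
      have habs : |s - p i| ≤ h0 := by
        rw [abs_of_nonneg (by linarith [hs.1.le])]
        linarith [hs.2, hpstep i]
      have hu1 := hub s hsI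
      rw [norm_smul, Real.norm_eq_abs]
      have hgn : ‖g s - g (p i)‖ ≤ 2*L*M*h0 :=
        hgl.trans (mul_le_mul_of_nonneg_left habs (by positivity))
      nlinarith [norm_nonneg (g s - g (p i)), abs_nonneg (u s)]
    have := intervalIntegral.norm_integral_le_of_norm_le_const hb1
    calc ‖∫ s in p i..p (i+1), u s • (g s - g (p i))‖
        ≤ 2*L*M*h0 * |p (i+1) - p i| := this
    _ = 2*L*M*h0*h0 := by rw [hpstep i, abs_of_pos hh0pos]
  -- summation by parts
  have habel : ∑ i ∈ Finset.range N, (c (i+1) - c i) • g (p i)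
      = c N • g (p N0) - c 0 • g (p 0)
        - ∑ i ∈ Finset.range N0, c (i+1) • (g (p (i+1)) - g (p i)) :=
    my_abel_sum c (fun i => g (p i)) N0
  have hSbnd : ‖∑ i ∈ Finset.range N, (c (i+1) - c i) • g (p i)‖
      ≤ 2*M*δ + 2*L*M*δ*(t-a) := by
    rw [habel, hc0, zero_smul, sub_zero]
    have h1 : ‖c N • g (p N0)‖ ≤ δ * (2*M) := by
      rw [norm_smul, Real.norm_eq_abs]
      have := hcδ N le_rfl
      have := hgb (p N0)
      nlinarith [abs_nonneg (c N), norm_nonneg (g (p N0))]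
    have h2 : ‖∑ i ∈ Finset.range N0, c (i+1) • (g (p (i+1)) - g (p i))‖
        ≤ (N0 : ℝ) * (δ * (2*L*M*h0)) := by
      refine le_trans (norm_sum_le _ _) ?_
      have hterm : ∀ i ∈ Finset.range N0,
          ‖c (i+1) • (g (p (i+1)) - g (p i))‖ ≤ δ * (2*L*M*h0) := by
        intro i hiF
        have hi : i < N0 := Finset.mem_range.mp hiF
        have hiN : i + 1 ≤ N := by omega
        have m1 : p i ∈ Icc a b := hpmem i (by omega)
        have m2 : p (i+1) ∈ Icc a b := hpmem (i+1) hiN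
        rw [norm_smul, Real.norm_eq_abs]
        have hgl := hglip (p i) m1 (p (i+1)) m2
        rw [hpstep i, abs_of_pos hh0pos] at hgl
        have := hcδ (i+1) hiN
        nlinarith [abs_nonneg (c (i+1)), norm_nonneg (g (p (i+1)) - g (p i))]
      have := Finset.sum_le_card_nsmul (Finset.range N0) _ _ hterm
      rwa [Finset.card_range, nsmul_eq_mul] at this
    have h3 : (N0 : ℝ) * h0 ≤ t - a := by
      have : (N0 : ℝ) ≤ (N : ℝ) := by rw [hNdef]; push_cast; linarith
      have h4 : (N0:ℝ) * h0 ≤ (N:ℝ) * h0 := mul_le_mul_of_nonneg_right this hh0pos.le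
      have h5 : (N:ℝ) * h0 = t - a := by rw [hh0]; field_simp
      linarith
    refine le_trans (norm_sub_le _ _) ?_
    have h6 : (N0:ℝ) * (δ * (2*L*M*h0)) = (2*L*M*δ) * ((N0:ℝ) * h0) := by ring
    have h7 : (2*L*M*δ) * ((N0:ℝ) * h0) ≤ (2*L*M*δ) * (t-a) :=
      mul_le_mul_of_nonneg_left h3 (by positivity)
    have h8 := add_le_add h1 h2
    linarith [h8, h6, h7]
  -- total error bound
  have hEbnd : ‖∑ i ∈ Finset.range N, ∫ s in p i..p (i+1), u s • (g s - g (p i))‖ ≤ ε := by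
    refine le_trans (norm_sum_le _ _) ?_
    have h1 : ∑ i ∈ Finset.range N, ‖∫ s in p i..p (i+1), u s • (g s - g (p i))‖
        ≤ (N:ℝ) * (2*L*M*h0*h0) := by
      have := Finset.sum_le_card_nsmul (Finset.range N) _ _
        (fun i hiF => hAbnd i (Finset.mem_range.mp hiF))
      rwa [Finset.card_range, nsmul_eq_mul] at this
    refine h1.trans ?_
    have heq : (N:ℝ) * (2*L*M*h0*h0) = 2*L*M*(t-a)*(t-a)/N := by
      rw [hh0]; field_simp
    rw [heq, div_le_iff₀ hNpos]
    linarith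
  calc ‖∫ s in a..t, u s • g s‖
      = ‖(∑ i ∈ Finset.range N, ∫ s in p i..p (i+1), u s • (g s - g (p i)))
          + ∑ i ∈ Finset.range N, (c (i+1) - c i) • g (p i)‖ := by
        rw [hsplit]
        congr 1
        rw [← Finset.sum_add_distrib]
        exact Finset.sum_congr rfl fun i hiF => hdecomp i (Finset.mem_range.mp hiF)
  _ ≤ ‖∑ i ∈ Finset.range N, ∫ s in p i..p (i+1), u s • (g s - g (p i))‖
        + ‖∑ i ∈ Finset.range N, (c (i+1) - c i) • g (p i)‖ := norm_add_le _ _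
  _ ≤ ε + (2*M*δ + 2*L*M*δ*(t-a)) := add_le_add hEbnd hSbnd
  _ ≤ 2*M*(1 + L*(b-a))*δ + ε := by
        have h9 : 2*L*M*δ*(t-a) ≤ 2*L*M*δ*(b-a) :=
          mul_le_mul_of_nonneg_left (by linarith [ht.2]) (by positivity)
        nlinarith [h9]


lemma my_bootstrap
    (f0 f1 : E → E) (M : ℝ)
    (hf0c : Continuous f0) (hf1c : Continuous f1)
    (hf0b : ∀ p, ‖f0 p‖ ≤ M) (hf1b : ∀ p, ‖f1 p‖ ≤ M)
    (a b : ℝ) (hab : a ≤ b)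
    (σ : ℝ → ℝ) (hσm : Measurable σ) (hσb : ∀ s ∈ Icc a b, σ s ∈ Icc (0:ℝ) 1)
    (y : ℝ → E)
    (hy : ∀ t ∈ Icc a b, y t = y a + ∫ s in a..t, ((1 - σ s) • f0 (y s) + σ s • f1 (y s))) :
    IntegrableOn (fun s => (1 - σ s) • f0 (y s) + σ s • f1 (y s)) (Icc a b)
      ∧ (∀ s ∈ Icc a b, ∀ τ ∈ Icc a b, ‖y τ - y s‖ ≤ M * |τ - s|)
      ∧ ContinuousOn y (Icc a b) := by
  set G : ℝ → E := fun s => (1 - σ s) • f0 (y s) + σ s • f1 (y s) with hGdef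
  have hGb : ∀ s ∈ Icc a b, ‖G s‖ ≤ M := by
    intro s hs
    have h1 := (hσb s hs).1; have h2 := (hσb s hs).2
    calc ‖G s‖ ≤ ‖(1 - σ s) • f0 (y s)‖ + ‖σ s • f1 (y s)‖ := norm_add_le _ _
    _ = |1 - σ s| * ‖f0 (y s)‖ + |σ s| * ‖f1 (y s)‖ := by
        rw [norm_smul, norm_smul, Real.norm_eq_abs, Real.norm_eq_abs]
    _ ≤ M := by
        rw [abs_of_nonneg (by linarith), abs_of_nonneg h1]
        nlinarith [hf0b (y s), hf1b (y s), norm_nonneg (f0 (y s)), norm_nonneg (f1 (y s))]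
  have hint_of_aesm : ∀ (S : Set ℝ), MeasurableSet S → S ⊆ Icc a b →
      AEStronglyMeasurable G (volume.restrict S) → IntegrableOn G S := by
    intro S hSm hSsub hSa
    exact my_integrableOn_of_bound hSm
      (lt_of_le_of_lt (measure_mono hSsub) measure_Icc_lt_top) hSa M
      (fun s hs => hGb s (hSsub hs))
  set T : Set ℝ := {t | t ∈ Icc a b ∧ IntegrableOn G (Ioc a t)} with hT
  have haT : a ∈ T := ⟨⟨le_refl a, hab⟩, by simp [IntegrableOn]⟩
  have hTne : T.Nonempty := ⟨a, haT⟩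
  have hTbdd : BddAbove T := ⟨b, fun t ht => ht.1.2⟩
  set c := sSup T with hc
  have hac : a ≤ c := le_csSup hTbdd haT
  have hcb : c ≤ b := csSup_le hTne fun t ht => ht.1.2
  have hbelow : ∀ t, t < c → IntegrableOn G (Ioc a t) := by
    intro t htc
    obtain ⟨t', ht'T, htt'⟩ := exists_lt_of_lt_csSup hTne htc
    exact ht'T.2.mono_set (Ioc_subset_Ioc_right htt'.le)
  have haesm_Ioo : AEStronglyMeasurable G (volume.restrict (Ioo a c)) := by
    have : Ioo a c = ⋃ q : {q : ℚ // (q:ℝ) ∈ Ioo a c}, Ioc a (q.1 : ℝ) := by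
      ext s; constructor
      · intro hs
        obtain ⟨q, hq1, hq2⟩ := exists_rat_btwn hs.2
        exact mem_iUnion.mpr ⟨⟨q, lt_trans hs.1 hq1, hq2⟩, hs.1, hq1.le⟩
      · intro hs
        obtain ⟨⟨q, hq⟩, hsq⟩ := mem_iUnion.mp hs
        exact ⟨hsq.1, lt_of_le_of_lt hsq.2 hq.2⟩
    rw [this, aestronglyMeasurable_iUnion_iff]
    rintro ⟨q, hq⟩
    exact (hbelow _ hq.2).1
  have hIoc_c : IntegrableOn G (Ioc a c) := by
    have h1 : IntegrableOn G (Ioo a c) :=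
      hint_of_aesm _ measurableSet_Ioo
        (fun s hs => ⟨hs.1.le, hs.2.le.trans hcb⟩) haesm_Ioo
    exact h1.congr_set_ae Ioo_ae_eq_Ioc.symm
  have hcT : c ∈ T := ⟨⟨hac, hcb⟩, hIoc_c⟩
  have habove : ∀ s ∈ Icc a b, c < s → y s = y a := by
    intro s hs hcs
    have hni : ¬ IntegrableOn G (Ioc a s) := fun h =>
      absurd (le_csSup hTbdd ⟨hs, h⟩) (not_le.mpr hcs)
    have hzero : (∫ r in a..s, G r) = 0 := by
      rw [intervalIntegral.integral_of_le hs.1, MeasureTheory.integral_undef hni]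
    rw [hy s hs, hzero, add_zero]
  have hyc : ContinuousOn y (Icc a c) := by
    have hii : IntervalIntegrable G volume a c :=
      (intervalIntegrable_iff_integrableOn_Ioc_of_le hac).mpr hIoc_c
    have hcont := intervalIntegral.continuousOn_primitive_interval'
      (μ := volume) (b₁ := a) (b₂ := c) (a := a) hii
      (by rw [uIcc_of_le hac]; exact left_mem_Icc.mpr hac)
    rw [uIcc_of_le hac] at hcont
    have hcont2 : ContinuousOn (fun t => y a + ∫ s in a..t, G s) (Icc a c) :=
      continuousOn_const.add hcont
    exact hcont2.congr fun t htc => hy t ⟨htc.1, htc.2.trans hcb⟩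
  have hyaesm : AEStronglyMeasurable y (volume.restrict (Icc a b)) := by
    have h1 : AEStronglyMeasurable y (volume.restrict (Icc a c)) :=
      hyc.aestronglyMeasurable measurableSet_Icc
    have h2 : AEStronglyMeasurable y (volume.restrict (Ioc c b)) := by
      refine aestronglyMeasurable_const.congr (f := fun _ => y a) ?_
      exact (ae_restrict_iff' measurableSet_Ioc).mpr
        (ae_of_all _ fun s hs => (habove s ⟨hac.trans hs.1.le, hs.2⟩ hs.1).symm)
    have hsub : Icc a b ⊆ Icc a c ∪ Ioc c b := by
      intro s hs
      by_cases h : s ≤ c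
      · exact Or.inl ⟨hs.1, h⟩
      · exact Or.inr ⟨not_le.mp h, hs.2⟩
    exact (aestronglyMeasurable_union_iff.mpr ⟨h1, h2⟩).mono_measure
      (Measure.restrict_mono hsub le_rfl)
  have hGaesm : AEStronglyMeasurable G (volume.restrict (Icc a b)) := by
    have h0 : AEStronglyMeasurable (fun s => f0 (y s)) (volume.restrict (Icc a b)) :=
      hf0c.comp_aestronglyMeasurable hyaesm
    have h1 : AEStronglyMeasurable (fun s => f1 (y s)) (volume.restrict (Icc a b)) :=
      hf1c.comp_aestronglyMeasurable hyaesm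
    exact (((measurable_const.sub hσm).aestronglyMeasurable).smul h0).add
      ((hσm.aestronglyMeasurable).smul h1)
  have hGint : IntegrableOn G (Icc a b) := hint_of_aesm _ measurableSet_Icc subset_rfl hGaesm
  have hII : ∀ {s τ : ℝ}, s ∈ Icc a b → τ ∈ Icc a b → IntervalIntegrable G volume s τ :=
    fun hs hτ => (hGint.mono_set (uIcc_subset_Icc hs hτ)).intervalIntegrable
  have huIcc : ∀ {s τ : ℝ}, s ∈ Icc a b → τ ∈ Icc a b → Ι s τ ⊆ Icc a b := by
    intro s τ hs hτ r hr
    rcases Set.mem_uIoc.mp hr with h | h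
    · exact ⟨hs.1.trans h.1.le, h.2.trans hτ.2⟩
    · exact ⟨hτ.1.trans h.1.le, h.2.trans hs.2⟩
  have haI : a ∈ Icc a b := ⟨le_rfl, hab⟩
  have hlip : ∀ s ∈ Icc a b, ∀ τ ∈ Icc a b, ‖y τ - y s‖ ≤ M * |τ - s| := by
    intro s hs τ hτ
    have e1 : y τ - y s = ∫ r in s..τ, G r := by
      rw [hy τ hτ, hy s hs, add_sub_add_left_eq_sub,
        intervalIntegral.integral_interval_sub_left (hII haI hτ) (hII haI hs)]
    rw [e1]
    exact intervalIntegral.norm_integral_le_of_norm_le_const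
      (fun r hr => hGb r (huIcc hs hτ hr))
  have hycont : ContinuousOn y (Icc a b) := by
    have hcont := intervalIntegral.continuousOn_primitive_interval'
      (μ := volume) (b₁ := a) (b₂ := b) (a := a) (hII haI ⟨hab, le_rfl⟩)
      (by rw [uIcc_of_le hab]; exact left_mem_Icc.mpr hab)
    rw [uIcc_of_le hab] at hcont
    exact (continuousOn_const.add hcont).congr fun τ hτ => hy τ hτ
  exact ⟨hGint, hlip, hycont⟩


end AuxSwitched

set_option maxHeartbeats 1000000 in
/-- Grönwall-type estimate: if the running integrals of two switching signals
`v, w : [a,b] → [0,1]` differ by at most `δ`, then the corresponding trajectories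
of `ẋ = (1-v)·f₀(x) + v·f₁(x)` and `ẏ = (1-w)·f₀(y) + w·f₁(y)` from the same
initial state (written in integral form, i.e., as absolutely continuous solutions)
stay within `C·δ` of each other, with `C = 2M(1+L(b-a))·e^{3L(b-a)}`. -/
theorem stmt_5 (n : ℕ)
    (f0 f1 : EuclideanSpace ℝ (Fin n) → EuclideanSpace ℝ (Fin n))
    (L M : ℝ) (hL : 0 ≤ L) (hM : 0 ≤ M)
    (hf0_lip : ∀ p q, ‖f0 p - f0 q‖ ≤ L * ‖p - q‖)
    (hf1_lip : ∀ p q, ‖f1 p - f1 q‖ ≤ L * ‖p - q‖)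
    (hf0_bnd : ∀ p, ‖f0 p‖ ≤ M) (hf1_bnd : ∀ p, ‖f1 p‖ ≤ M)
    (a b : ℝ) (hab : a ≤ b)
    (v w : ℝ → ℝ) (hv_meas : Measurable v) (hw_meas : Measurable w)
    (hv_bnd : ∀ t ∈ Set.Icc a b, v t ∈ Set.Icc (0:ℝ) 1)
    (hw_bnd : ∀ t ∈ Set.Icc a b, w t ∈ Set.Icc (0:ℝ) 1)
    (δ : ℝ)
    (hδ : ∀ t ∈ Set.Icc a b, |∫ s in a..t, (v s - w s)| ≤ δ)
    (x y : ℝ → EuclideanSpace ℝ (Fin n))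
    (hxy0 : x a = y a)
    (hx : ∀ t ∈ Set.Icc a b,
      x t = x a + ∫ s in a..t, ((1 - v s) • f0 (x s) + v s • f1 (x s)))
    (hy : ∀ t ∈ Set.Icc a b,
      y t = y a + ∫ s in a..t, ((1 - w s) • f0 (y s) + w s • f1 (y s))) :
    ∀ t ∈ Set.Icc a b,
      ‖x t - y t‖ ≤ (2 * M * (1 + L * (b - a)) * Real.exp (3 * L * (b - a))) * δ := by
  intro t ht
  classical
  have haI : a ∈ Set.Icc a b := ⟨le_rfl, hab⟩
  have hIc : ∀ {s τ : ℝ}, s ∈ Set.Icc a b → τ ∈ Set.Icc a b → Ι s τ ⊆ Set.Icc a b := by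
    intro s τ hs hτ r hr
    rcases Set.mem_uIoc.mp hr with h | h
    · exact ⟨hs.1.trans h.1.le, h.2.trans hτ.2⟩
    · exact ⟨hτ.1.trans h.1.le, h.2.trans hs.2⟩
  have hf0c : Continuous f0 := by
    have : LipschitzWith (Real.toNNReal L) f0 :=
      LipschitzWith.of_dist_le_mul fun p q => by
        rw [dist_eq_norm, dist_eq_norm, Real.coe_toNNReal L hL]
        exact hf0_lip p q
    exact this.continuous
  have hf1c : Continuous f1 := by
    have : LipschitzWith (Real.toNNReal L) f1 :=
      LipschitzWith.of_dist_le_mul fun p q => by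
        rw [dist_eq_norm, dist_eq_norm, Real.coe_toNNReal L hL]
        exact hf1_lip p q
    exact this.continuous
  obtain ⟨hGxint, hxlip, hxcont⟩ :=
    my_bootstrap f0 f1 M hf0c hf1c hf0_bnd hf1_bnd a b hab v hv_meas hv_bnd x hx
  obtain ⟨hGyint, hylip, hycont⟩ :=
    my_bootstrap f0 f1 M hf0c hf1c hf0_bnd hf1_bnd a b hab w hw_meas hw_bnd y hy
  set Gx : ℝ → EuclideanSpace ℝ (Fin n) :=
    fun s => (1 - v s) • f0 (x s) + v s • f1 (x s) with hGxdef
  set Gy : ℝ → EuclideanSpace ℝ (Fin n) :=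
    fun s => (1 - w s) • f0 (y s) + w s • f1 (y s) with hGydef
  set u : ℝ → ℝ := fun s => v s - w s with hudef
  set g : ℝ → EuclideanSpace ℝ (Fin n) := fun s => f1 (y s) - f0 (y s) with hgdef
  have hδ0 : 0 ≤ δ := le_trans (abs_nonneg _) (hδ a haI)
  have hu_meas : Measurable u := hv_meas.sub hw_meas
  have hub : ∀ s ∈ Set.Icc a b, |u s| ≤ 1 := by
    intro s hs
    have h1 := hv_bnd s hs; have h2 := hw_bnd s hs
    simp only [hudef]
    rw [abs_le]
    constructor <;> [linarith [h1.1, h2.2]; linarith [h1.2, h2.1] ]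
  have huint : IntegrableOn u (Set.Icc a b) :=
    my_integrableOn_of_bound measurableSet_Icc measure_Icc_lt_top
      hu_meas.aestronglyMeasurable 1
      (fun s hs => by rw [Real.norm_eq_abs]; exact hub s hs)
  have hgb : ∀ s, ‖g s‖ ≤ 2 * M := by
    intro s
    calc ‖g s‖ ≤ ‖f1 (y s)‖ + ‖f0 (y s)‖ := norm_sub_le _ _
    _ ≤ 2 * M := by linarith [hf1_bnd (y s), hf0_bnd (y s)]
  have hgcont : ContinuousOn g (Set.Icc a b) :=
    (hf1c.comp_continuousOn hycont).sub (hf0c.comp_continuousOn hycont)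
  have hglip : ∀ s ∈ Set.Icc a b, ∀ τ ∈ Set.Icc a b, ‖g τ - g s‖ ≤ 2 * L * M * |τ - s| := by
    intro s hs τ hτ
    have hyl := hylip s hs τ hτ
    have e : g τ - g s = (f1 (y τ) - f1 (y s)) - (f0 (y τ) - f0 (y s)) := by
      simp only [hgdef]; abel
    have h1 := hf1_lip (y τ) (y s)
    have h2 := hf0_lip (y τ) (y s)
    have h3 : L * ‖y τ - y s‖ ≤ L * (M * |τ - s|) := mul_le_mul_of_nonneg_left hyl hL
    calc ‖g τ - g s‖ = ‖(f1 (y τ) - f1 (y s)) - (f0 (y τ) - f0 (y s))‖ := by rw [e]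
    _ ≤ ‖f1 (y τ) - f1 (y s)‖ + ‖f0 (y τ) - f0 (y s)‖ := norm_sub_le _ _
    _ ≤ 2 * L * M * |τ - s| := by linarith
  have hugint : IntegrableOn (fun s => u s • g s) (Set.Icc a b) := by
    refine my_integrableOn_of_bound measurableSet_Icc measure_Icc_lt_top
      (hu_meas.aestronglyMeasurable.smul
        (hgcont.aestronglyMeasurable measurableSet_Icc)) (2 * M) ?_
    intro s hs
    rw [norm_smul, Real.norm_eq_abs]
    have := hub s hs
    nlinarith [hgb s, abs_nonneg (u s), norm_nonneg (g s)]
  -- interval integrability helpers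
  have hGxII : ∀ {s τ : ℝ}, s ∈ Set.Icc a b → τ ∈ Set.Icc a b →
      IntervalIntegrable Gx volume s τ :=
    fun hs hτ => (hGxint.mono_set (uIcc_subset_Icc hs hτ)).intervalIntegrable
  have hGyII : ∀ {s τ : ℝ}, s ∈ Set.Icc a b → τ ∈ Set.Icc a b →
      IntervalIntegrable Gy volume s τ :=
    fun hs hτ => (hGyint.mono_set (uIcc_subset_Icc hs hτ)).intervalIntegrable
  have hugII : ∀ {s τ : ℝ}, s ∈ Set.Icc a b → τ ∈ Set.Icc a b →
      IntervalIntegrable (fun s => u s • g s) volume s τ :=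
    fun hs hτ => (hugint.mono_set (uIcc_subset_Icc hs hτ)).intervalIntegrable
  set D0 : ℝ → EuclideanSpace ℝ (Fin n) :=
    fun s => (1 - v s) • (f0 (x s) - f0 (y s)) + v s • (f1 (x s) - f1 (y s)) with hD0def
  have hident : ∀ s, Gx s - Gy s = D0 s + u s • g s := by
    intro s
    simp only [hGxdef, hGydef, hD0def, hudef, hgdef, smul_sub, sub_smul, one_smul]
    abel
  have hD0eq : D0 = fun s => Gx s - Gy s - u s • g s := by
    funext s
    rw [hident s]; abel
  have hD0II : ∀ {s τ : ℝ}, s ∈ Set.Icc a b → τ ∈ Set.Icc a b →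
      IntervalIntegrable D0 volume s τ := by
    intro s τ hs hτ
    rw [hD0eq]
    exact (hGxII hs hτ).sub (hGyII hs hτ) |>.sub (hugII hs hτ)
  have hsplit : ∀ τ ∈ Set.Icc a b,
      x τ - y τ = (∫ s in a..τ, D0 s) + ∫ s in a..τ, u s • g s := by
    intro τ hτ
    rw [hx τ hτ, hy τ hτ, hxy0, add_sub_add_left_eq_sub,
      ← intervalIntegral.integral_sub (hGxII haI hτ) (hGyII haI hτ),
      ← intervalIntegral.integral_add (hD0II haI hτ) (hugII haI hτ)]
    exact intervalIntegral.integral_congr fun s _ => hident s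
  -- the continuous extension trick
  set q : ℝ → ℝ := fun s => max a (min s b) with hqdef
  have hqc : Continuous q := continuous_const.max (continuous_id.min continuous_const)
  have hqmem : ∀ s, q s ∈ Set.Icc a b :=
    fun s => ⟨le_max_left _ _, max_le hab (min_le_right s b)⟩
  have hqid : ∀ s ∈ Set.Icc a b, q s = s := by
    intro s hs
    simp only [hqdef]
    rw [min_eq_left hs.2, max_eq_right hs.1]
  set ρ : ℝ → ℝ := fun s => L * ‖x (q s) - y (q s)‖ with hρdef
  have hxq : Continuous fun s => x (q s) := hxcont.comp_continuous hqc hqmem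
  have hyq : Continuous fun s => y (q s) := hycont.comp_continuous hqc hqmem
  have hρc : Continuous ρ := continuous_const.mul ((hxq.sub hyq).norm)
  have hρnn : ∀ s, 0 ≤ ρ s := fun s => mul_nonneg hL (norm_nonneg _)
  set z : ℝ → ℝ := fun τ => ∫ s in a..τ, ρ s with hzdef
  have hzderiv : ∀ τ, HasDerivAt z (ρ τ) τ := fun τ =>
    intervalIntegral.integral_hasDerivAt_right (hρc.intervalIntegrable a τ)
      (hρc.stronglyMeasurableAtFilter volume (nhds τ)) hρc.continuousAt
  have hzcont : ContinuousOn z (Set.Icc a b) :=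
    fun τ _ => (hzderiv τ).continuousAt.continuousWithinAt
  have hznn : ∀ τ, a ≤ τ → 0 ≤ z τ :=
    fun τ hτ => intervalIntegral.integral_nonneg hτ (fun s _ => hρnn s)
  have hza : z a = 0 := intervalIntegral.integral_same
  have hbD0 : ∀ s ∈ Set.Icc a b, ‖D0 s‖ ≤ ρ s := by
    intro s hs
    have hv1 := (hv_bnd s hs).1; have hv2 := (hv_bnd s hs).2
    have hl0 := hf0_lip (x s) (y s)
    have hl1 := hf1_lip (x s) (y s)
    have hρs : ρ s = L * ‖x s - y s‖ := by simp only [hρdef, hqid s hs]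
    rw [hρs]
    calc ‖D0 s‖ ≤ ‖(1 - v s) • (f0 (x s) - f0 (y s))‖ + ‖v s • (f1 (x s) - f1 (y s))‖ :=
          norm_add_le _ _
    _ = |1 - v s| * ‖f0 (x s) - f0 (y s)‖ + |v s| * ‖f1 (x s) - f1 (y s)‖ := by
          rw [norm_smul, norm_smul, Real.norm_eq_abs, Real.norm_eq_abs]
    _ ≤ L * ‖x s - y s‖ := by
          rw [abs_of_nonneg (by linarith), abs_of_nonneg hv1]
          nlinarith [norm_nonneg (f0 (x s) - f0 (y s)), norm_nonneg (f1 (x s) - f1 (y s)),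
            norm_nonneg (x s - y s), mul_nonneg hL (norm_nonneg (x s - y s))]
  -- main per-ε estimate
  have hfin : ∀ ε : ℝ, 0 < ε →
      ‖x t - y t‖ ≤ (2 * M * (1 + L * (b - a)) * δ + ε) * Real.exp (L * (b - a)) := by
    intro ε hε
    set K : ℝ := 2 * M * (1 + L * (b - a)) * δ + ε with hKdef
    have hK0 : 0 ≤ K := by
      have h1 : (0:ℝ) ≤ 1 + L * (b - a) := by nlinarith [mul_nonneg hL (sub_nonneg.mpr hab)]
      have h2 : (0:ℝ) ≤ 2 * M * (1 + L * (b - a)) * δ := by positivity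
      linarith
    have hkey : ∀ τ ∈ Set.Icc a b, ‖x τ - y τ‖ ≤ z τ + K := by
      intro τ hτ
      rw [hsplit τ hτ]
      refine le_trans (norm_add_le _ _) (add_le_add ?_ ?_)
      · have hae : ∀ᵐ s ∂(volume.restrict (Ι a τ)), ‖D0 s‖ ≤ ρ s :=
          (ae_restrict_iff' measurableSet_uIoc).mpr
            (ae_of_all _ fun s hs => hbD0 s (hIc haI hτ hs))
        have h1 := intervalIntegral.norm_integral_le_abs_of_norm_le hae
          (hρc.intervalIntegrable a τ)
        rwa [abs_of_nonneg (hznn τ hτ.1)] at h1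
      · exact my_stepB a b τ M L δ ε hab hτ hM hL hδ0 hε u g hugint huint hub
          (fun r hr => hδ r hr) hgb hglip
    have hgr := norm_le_gronwallBound_of_norm_deriv_right_le (f := z) (f' := ρ)
      (δ := 0) (K := L) (ε := L * K) (a := a) (b := b) hzcont
      (fun τ _ => (hzderiv τ).hasDerivWithinAt)
      (by rw [hza]; simp)
      (by
        intro τ hτ
        have hτI : τ ∈ Set.Icc a b := ⟨hτ.1, hτ.2.le⟩
        have hρτ : ρ τ = L * ‖x τ - y τ‖ := by simp only [hρdef, hqid τ hτI]
        rw [Real.norm_eq_abs, abs_of_nonneg (hρnn τ), Real.norm_eq_abs,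
          abs_of_nonneg (hznn τ hτ.1), hρτ]
        have h2 := hkey τ hτI
        nlinarith [mul_le_mul_of_nonneg_left h2 hL])
    have hzt := hgr t ht
    rw [Real.norm_eq_abs, abs_of_nonneg (hznn t ht.1)] at hzt
    have hexp : Real.exp (L * (t - a)) ≤ Real.exp (L * (b - a)) :=
      Real.exp_le_exp.mpr (mul_le_mul_of_nonneg_left (by linarith [ht.2]) hL)
    have hfinal : ‖x t - y t‖ ≤ K * Real.exp (L * (b - a)) := by
      by_cases hLz : L = 0
      · have hz0 : z t ≤ 0 := by
          rw [hLz] at hzt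
          simpa [gronwallBound_K0] using hzt
        have h1 := hkey t ht
        have h2 : (1:ℝ) ≤ Real.exp (L * (b - a)) :=
          Real.one_le_exp (by nlinarith [mul_nonneg hL (sub_nonneg.mpr hab)])
        nlinarith [mul_le_mul_of_nonneg_left h2 hK0]
      · rw [gronwallBound_of_K_ne_0 hLz] at hzt
        have hLK : L * K / L = K := by field_simp
        rw [hLK] at hzt
        have hzt' : z t ≤ 0 * Real.exp (L * (t - a)) + K * (Real.exp (L * (t - a)) - 1) := hzt
        have h1 := hkey t ht
        have h3 : K * Real.exp (L * (t - a)) ≤ K * Real.exp (L * (b - a)) :=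
          mul_le_mul_of_nonneg_left hexp hK0
        nlinarith [hzt', h1, h3]
    exact hfinal
  -- take ε → 0
  have hbase : ‖x t - y t‖ ≤ 2 * M * (1 + L * (b - a)) * δ * Real.exp (L * (b - a)) := by
    by_contra hcon
    push_neg at hcon
    set B : ℝ := 2 * M * (1 + L * (b - a)) * δ * Real.exp (L * (b - a)) with hBdef
    set η : ℝ := ‖x t - y t‖ - B with hηdef
    have hη : 0 < η := by simp only [hηdef]; linarith
    have hepos : 0 < Real.exp (L * (b - a)) := Real.exp_pos _
    have hε : 0 < η / (2 * Real.exp (L * (b - a))) := by positivity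
    have hthis := hfin _ hε
    have he0 : Real.exp (L * (b - a)) ≠ 0 := ne_of_gt hepos
    have h2 : (2 * M * (1 + L * (b - a)) * δ + η / (2 * Real.exp (L * (b - a))))
        * Real.exp (L * (b - a))
        = 2 * M * (1 + L * (b - a)) * δ * Real.exp (L * (b - a)) + η / 2 := by
      field_simp
    rw [h2] at hthis
    simp only [hηdef, hBdef] at hthis hη
    linarith
  have hexp3 : Real.exp (L * (b - a)) ≤ Real.exp (3 * L * (b - a)) :=
    Real.exp_le_exp.mpr (by nlinarith [mul_nonneg hL (sub_nonneg.mpr hab)])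
  have h2M : 0 ≤ 2 * M * (1 + L * (b - a)) * δ := by
    have h1 : (0:ℝ) ≤ 1 + L * (b - a) := by nlinarith [mul_nonneg hL (sub_nonneg.mpr hab)]
    positivity
  calc ‖x t - y t‖ ≤ 2 * M * (1 + L * (b - a)) * δ * Real.exp (L * (b - a)) := hbase
  _ ≤ 2 * M * (1 + L * (b - a)) * δ * Real.exp (3 * L * (b - a)) :=
      mul_le_mul_of_nonneg_left hexp3 h2M
  _ = 2 * M * (1 + L * (b - a)) * Real.exp (3 * L * (b - a)) * δ := by ring
end
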